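/- Suppose X ∈ ℝ^{n×p} with ‖X^T X - I_p‖_F ≤ 1/6, and let X_+ = A(X) - η G, where A(X) = (1/8)X(15 I_p - 10 X^T X + 3(X^T X)^2), ‖G‖_F ≤ M, and 0 < η ≤ 1/(19M). Then ‖X_+^T X_+ - I_p‖_F ≤ (1/36)‖X^T X - I_p‖_F + 3ηM, and consequently ‖X_+^T X_+ - I_p‖_F ≤ 1/6. -/
import Mathlib

open Matrix

attribute [local instance] Matrix.frobeniusSeminormedAddCommGroup
  Matrix.frobeniusNormedSpace Matrix.frobeniusNormedRing

/-- Frobenius norm of a real matrix. -/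
noncomputable def frob {m n : ℕ} (X : Matrix (Fin m) (Fin n) ℝ) : ℝ :=
  Real.sqrt (∑ i, ∑ j, (X i j) ^ 2)

/-- The constraint dissolving mapping `A(X) = (1/8) X (15 Iₚ - 10 XᵀX + 3 (XᵀX)²)`. -/
noncomputable def cdMap {n p : ℕ} (X : Matrix (Fin n) (Fin p) ℝ) : Matrix (Fin n) (Fin p) ℝ :=
  (1 / 8 : ℝ) • (X * ((15 : ℝ) • (1 : Matrix (Fin p) (Fin p) ℝ)
    - (10 : ℝ) • (Xᵀ * X) + (3 : ℝ) • (Xᵀ * X) ^ 2))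

noncomputable def ip {a b : ℕ} (A B : Matrix (Fin a) (Fin b) ℝ) : ℝ :=
  ∑ i, ∑ j, A i j * B i j

lemma frob_eq_norm {m n : ℕ} (X : Matrix (Fin m) (Fin n) ℝ) : frob X = ‖X‖ := by
  rw [frob, Matrix.frobenius_norm_def, ← Real.sqrt_eq_rpow]
  congr 1
  simp [Real.rpow_two, sq_abs, Real.norm_eq_abs]

lemma norm_eq_sqrt_ip {a b : ℕ} (A : Matrix (Fin a) (Fin b) ℝ) : ‖A‖ = Real.sqrt (ip A A) := by
  rw [← frob_eq_norm, frob, ip]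
  congr 1
  simp [pow_two]

lemma ip_nonneg {a b : ℕ} (A : Matrix (Fin a) (Fin b) ℝ) : 0 ≤ ip A A := by
  apply Finset.sum_nonneg
  intro i _
  apply Finset.sum_nonneg
  intro j _
  exact mul_self_nonneg _

lemma ip_self_eq {a b : ℕ} (A : Matrix (Fin a) (Fin b) ℝ) : ip A A = ‖A‖ ^ 2 := by
  rw [norm_eq_sqrt_ip, Real.sq_sqrt (ip_nonneg A)]

lemma ip_le {a b : ℕ} (A B : Matrix (Fin a) (Fin b) ℝ) : ip A B ≤ ‖A‖ * ‖B‖ := by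
  have h2 : (ip A B) ^ 2 ≤ ip A A * ip B B := by
    simp only [ip, ← Finset.sum_product', Finset.univ_product_univ]
    have := Finset.sum_mul_sq_le_sq_mul_sq Finset.univ
      (fun x : Fin a × Fin b => A x.1 x.2) (fun x : Fin a × Fin b => B x.1 x.2)
    simpa [pow_two] using this
  calc ip A B ≤ |ip A B| := le_abs_self _
    _ = Real.sqrt ((ip A B) ^ 2) := (Real.sqrt_sq_eq_abs _).symm
    _ ≤ Real.sqrt (ip A A * ip B B) := Real.sqrt_le_sqrt h2
    _ = Real.sqrt (ip A A) * Real.sqrt (ip B B) := Real.sqrt_mul (ip_nonneg A) _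
    _ = ‖A‖ * ‖B‖ := by rw [norm_eq_sqrt_ip, norm_eq_sqrt_ip]

lemma ip_eq_trace {a b : ℕ} (A B : Matrix (Fin a) (Fin b) ℝ) : ip A B = (Aᵀ * B).trace := by
  simp only [ip, Matrix.trace, Matrix.diag, Matrix.mul_apply, Matrix.transpose_apply]
  rw [Finset.sum_comm]

lemma ip_adjoint {n p q : ℕ} (X : Matrix (Fin n) (Fin p) ℝ) (U : Matrix (Fin p) (Fin q) ℝ)
    (G : Matrix (Fin n) (Fin q) ℝ) : ip U (Xᵀ * G) = ip (X * U) G := by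
  rw [ip_eq_trace, ip_eq_trace]
  simp [Matrix.transpose_mul, Matrix.mul_assoc]

lemma ip_add_right {a b : ℕ} (A B C : Matrix (Fin a) (Fin b) ℝ) :
    ip A (B + C) = ip A B + ip A C := by
  simp [ip, mul_add, Finset.sum_add_distrib]

/-- key operator-type bound: `‖Xᵀ G‖_F ≤ (13/12) ‖G‖_F` when `‖XᵀX - I‖_F ≤ 1/6`. -/
lemma key_bound {n p q : ℕ} (X : Matrix (Fin n) (Fin p) ℝ) (G : Matrix (Fin n) (Fin q) ℝ)
    (h : ‖Xᵀ * X - 1‖ ≤ 1 / 6) : ‖Xᵀ * G‖ ≤ (13 / 12) * ‖G‖ := by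
  set U := Xᵀ * G with hU
  set e := Xᵀ * X - 1 with he
  have hXXU : Xᵀ * (X * U) = U + e * U := by
    rw [← Matrix.mul_assoc, he, Matrix.sub_mul, Matrix.one_mul]
    abel
  have hXU_sq : ‖X * U‖ ^ 2 ≤ (7 / 6) * ‖U‖ ^ 2 := by
    have h1 : ‖X * U‖ ^ 2 = ip U U + ip U (e * U) := by
      rw [← ip_self_eq, ← ip_adjoint, hXXU, ip_add_right]
    have h2 : ip U (e * U) ≤ (1 / 6) * ‖U‖ ^ 2 := by
      calc ip U (e * U) ≤ ‖U‖ * ‖e * U‖ := ip_le _ _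
        _ ≤ ‖U‖ * (‖e‖ * ‖U‖) := by
            gcongr
            exact Matrix.frobenius_norm_mul e U
        _ ≤ ‖U‖ * ((1 / 6) * ‖U‖) := by
            gcongr
        _ = (1 / 6) * ‖U‖ ^ 2 := by ring
    rw [h1, ip_self_eq]
    linarith
  have hXU : ‖X * U‖ ≤ (13 / 12) * ‖U‖ := by
    nlinarith [norm_nonneg (X * U), norm_nonneg U]
  have hU2 : ‖U‖ ^ 2 ≤ (13 / 12) * ‖U‖ * ‖G‖ := by
    calc ‖U‖ ^ 2 = ip U U := (ip_self_eq U).symm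
      _ = ip (X * U) G := by rw [hU, ip_adjoint]
      _ ≤ ‖X * U‖ * ‖G‖ := ip_le _ _
      _ ≤ (13 / 12) * ‖U‖ * ‖G‖ := by gcongr
  rcases eq_or_lt_of_le (norm_nonneg U) with h0 | h0
  · rw [← h0]
    positivity
  · nlinarith [norm_nonneg G]
set_option maxHeartbeats 2000000 in
theorem stmt_17 {n p : ℕ} (X G : Matrix (Fin n) (Fin p) ℝ) (η M : ℝ)
    (hfeas : frob (Xᵀ * X - 1) ≤ 1 / 6)
    (hG : frob G ≤ M) (hη : 0 < η) (hη' : η ≤ 1 / (19 * M)) :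
    frob ((cdMap X - η • G)ᵀ * (cdMap X - η • G) - 1) ≤
        (1 / 36) * frob (Xᵀ * X - 1) + 3 * η * M ∧
      frob ((cdMap X - η • G)ᵀ * (cdMap X - η • G) - 1) ≤ 1 / 6 := by
  simp only [frob_eq_norm] at hfeas hG ⊢
  have hM0 : 0 ≤ M := le_trans (norm_nonneg G) hG
  have hMpos : 0 < M := by
    rcases hM0.lt_or_eq with h | h
    · exact h
    · exfalso
      rw [← h] at hη'
      simp at hη'
      linarith
  have hηM : η * M ≤ 1 / 19 := by
    have := (le_div_iff₀ (by positivity : (0:ℝ) < 19 * M)).mp hη'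
    linarith
  have hU13 : ‖Xᵀ * G‖ ≤ (13 / 12) * ‖G‖ := key_bound X G hfeas
  set A := cdMap X with hAdef
  set e := Xᵀ * X - 1 with he
  clear_value e
  have hS : Xᵀ * X = 1 + e := by rw [he]; abel
  set Q : Matrix (Fin p) (Fin p) ℝ :=
    (15 : ℝ) • 1 - (10 : ℝ) • (Xᵀ * X) + (3 : ℝ) • (Xᵀ * X) ^ 2 with hQ
  have hAdef' : A = (1 / 8 : ℝ) • (X * Q) := by rw [hQ, hAdef, cdMap]
  clear_value A
  have hQfold : Q = (15 : ℝ) • 1 - (10 : ℝ) • (Xᵀ * X) + (3 : ℝ) • (Xᵀ * X) ^ 2 := hQ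
  clear_value Q
  have hAt : Aᵀ = (1 / 8 : ℝ) • (Q * Xᵀ) := by
    rw [hAdef', Matrix.transpose_smul, Matrix.transpose_mul]
    congr 1
    rw [hQfold]
    simp [Matrix.transpose_sub, Matrix.transpose_add, Matrix.transpose_smul,
      Matrix.transpose_one, Matrix.transpose_pow, Matrix.transpose_mul,
      Matrix.transpose_transpose]
  have hAA : Aᵀ * A = (1 / 64 : ℝ) • (Q * (Xᵀ * X) * Q) := by
    rw [hAt, hAdef', Matrix.smul_mul, Matrix.mul_smul, smul_smul]
    congr 1
    · norm_num
    · simp [Matrix.mul_assoc]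
  have hkey : Aᵀ * A - 1 = (5/8 : ℝ) • e^3 - (15/64 : ℝ) • e^4 + (9/64 : ℝ) • e^5 := by
    rw [hAA, hQfold, hS]
    noncomm_ring
    module
  have hQe : Q = (8 : ℝ) • 1 - (4 : ℝ) • e + (3 : ℝ) • e^2 := by
    rw [hQfold, hS]
    noncomm_ring
    module
  set U := Xᵀ * G with hUdef
  clear_value U
  have hAG : Aᵀ * G = U - (1/2 : ℝ) • (e * U) + (3/8 : ℝ) • (e^2 * U) := by
    rw [hAt, hQe, Matrix.smul_mul, Matrix.mul_assoc, ← hUdef]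
    rw [Matrix.add_mul, Matrix.sub_mul, Matrix.smul_mul, Matrix.smul_mul, Matrix.smul_mul,
      Matrix.one_mul]
    module
  have hUM : ‖U‖ ≤ (13 / 12) * M := by
    calc ‖U‖ ≤ (13 / 12) * ‖G‖ := hU13
      _ ≤ (13 / 12) * M := by gcongr
  have hnormAG : ‖Aᵀ * G‖ ≤ (455 / 384) * M := by
    rw [hAG]
    have t1 : ‖U - (1/2 : ℝ) • (e * U) + (3/8 : ℝ) • (e^2 * U)‖ ≤
        ‖U‖ + ‖(1/2 : ℝ) • (e * U)‖ + ‖(3/8 : ℝ) • (e^2 * U)‖ := by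
      calc ‖U - (1/2 : ℝ) • (e * U) + (3/8 : ℝ) • (e^2 * U)‖ ≤
          ‖U - (1/2 : ℝ) • (e * U)‖ + ‖(3/8 : ℝ) • (e^2 * U)‖ := norm_add_le _ _
        _ ≤ ‖U‖ + ‖(1/2 : ℝ) • (e * U)‖ + ‖(3/8 : ℝ) • (e^2 * U)‖ := by
            have := norm_sub_le U ((1/2 : ℝ) • (e * U))
            linarith
    have h2 : ‖(1/2 : ℝ) • (e * U)‖ ≤ (1/2) * ((1/6) * ‖U‖) := by
      rw [norm_smul, Real.norm_eq_abs]
      have : ‖e * U‖ ≤ ‖e‖ * ‖U‖ := Matrix.frobenius_norm_mul e U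
      have h6 : ‖e‖ * ‖U‖ ≤ (1/6) * ‖U‖ := by
        apply mul_le_mul_of_nonneg_right hfeas (norm_nonneg U)
      rw [abs_of_pos (by norm_num : (0:ℝ) < 1/2)]
      nlinarith [norm_nonneg (e * U)]
    have h3 : ‖(3/8 : ℝ) • (e^2 * U)‖ ≤ (3/8) * ((1/36) * ‖U‖) := by
      rw [norm_smul, Real.norm_eq_abs]
      have hm : ‖e^2 * U‖ ≤ ‖e^2‖ * ‖U‖ := Matrix.frobenius_norm_mul _ U
      have hp : ‖e^2‖ ≤ ‖e‖^2 := norm_pow_le' e (by norm_num)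
      have h6 : ‖e‖^2 ≤ 1/36 := by nlinarith [norm_nonneg e]
      rw [abs_of_pos (by norm_num : (0:ℝ) < 3/8)]
      nlinarith [norm_nonneg (e^2 * U), norm_nonneg U, norm_nonneg (e^2)]
    have : ‖U‖ + ‖(1/2 : ℝ) • (e * U)‖ + ‖(3/8 : ℝ) • (e^2 * U)‖ ≤ (35/32) * ‖U‖ := by
      linarith
    calc ‖U - (1/2 : ℝ) • (e * U) + (3/8 : ℝ) • (e^2 * U)‖ ≤ (35/32) * ‖U‖ := by linarith
      _ ≤ (35/32) * ((13/12) * M) := by gcongr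
      _ = (455/384) * M := by ring
  have hcube : ‖Aᵀ * A - 1‖ ≤ (1/36) * ‖e‖ := by
    rw [hkey]
    have t1 : ‖(5/8 : ℝ) • e^3 - (15/64 : ℝ) • e^4 + (9/64 : ℝ) • e^5‖ ≤
        ‖(5/8 : ℝ) • e^3‖ + ‖(15/64 : ℝ) • e^4‖ + ‖(9/64 : ℝ) • e^5‖ := by
      calc ‖(5/8 : ℝ) • e^3 - (15/64 : ℝ) • e^4 + (9/64 : ℝ) • e^5‖ ≤
          ‖(5/8 : ℝ) • e^3 - (15/64 : ℝ) • e^4‖ + ‖(9/64 : ℝ) • e^5‖ := norm_add_le _ _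
        _ ≤ _ := by
            have := norm_sub_le ((5/8 : ℝ) • e^3) ((15/64 : ℝ) • e^4)
            linarith
    have h3 : ‖e^3‖ ≤ ‖e‖^3 := norm_pow_le' e (by norm_num)
    have h4 : ‖e^4‖ ≤ ‖e‖^4 := norm_pow_le' e (by norm_num)
    have h5 : ‖e^5‖ ≤ ‖e‖^5 := norm_pow_le' e (by norm_num)
    simp only [norm_smul, Real.norm_eq_abs] at t1
    rw [abs_of_pos (by norm_num : (0:ℝ) < 5/8), abs_of_pos (by norm_num : (0:ℝ) < 15/64),
      abs_of_pos (by norm_num : (0:ℝ) < 9/64)] at t1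
    have hε : (0:ℝ) ≤ ‖e‖ := norm_nonneg e
    nlinarith [pow_nonneg hε 2, pow_nonneg hε 3, pow_nonneg hε 4, pow_nonneg hε 5,
      pow_le_pow_left₀ hε hfeas 2, pow_le_pow_left₀ hε hfeas 3, pow_le_pow_left₀ hε hfeas 4,
      pow_le_pow_left₀ hε hfeas 5]
  have hexp : (A - η • G)ᵀ * (A - η • G) - 1 =
      (Aᵀ * A - 1) + (-(η • (Aᵀ * G)) + (-(η • (Gᵀ * A)) + (η * η) • (Gᵀ * G))) := by
    rw [Matrix.transpose_sub, Matrix.transpose_smul, Matrix.sub_mul, Matrix.mul_sub,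
      Matrix.mul_sub, Matrix.smul_mul, Matrix.mul_smul, Matrix.mul_smul,
      Matrix.smul_mul, smul_smul]
    module
  have hsymm : ‖Gᵀ * A‖ = ‖Aᵀ * G‖ := by
    rw [← Matrix.frobenius_norm_transpose (Gᵀ * A), Matrix.transpose_mul,
      Matrix.transpose_transpose]
  have hGG : ‖Gᵀ * G‖ ≤ M * M := by
    calc ‖Gᵀ * G‖ ≤ ‖Gᵀ‖ * ‖G‖ := Matrix.frobenius_norm_mul _ _
      _ = ‖G‖ * ‖G‖ := by rw [Matrix.frobenius_norm_transpose]
      _ ≤ M * M := by gcongr <;> exact norm_nonneg G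
  have hmain : ‖(A - η • G)ᵀ * (A - η • G) - 1‖ ≤ (1/36) * ‖e‖ + 3 * η * M := by
    rw [hexp]
    have t1 : ‖(Aᵀ * A - 1) + (-(η • (Aᵀ * G)) + (-(η • (Gᵀ * A)) + (η * η) • (Gᵀ * G)))‖ ≤
        ‖Aᵀ * A - 1‖ + (‖η • (Aᵀ * G)‖ + (‖η • (Gᵀ * A)‖ + ‖(η * η) • (Gᵀ * G)‖)) := by
      refine (norm_add_le _ _).trans ?_
      gcongr
      refine (norm_add_le _ _).trans ?_
      rw [norm_neg]
      gcongr
      refine (norm_add_le _ _).trans ?_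
      rw [norm_neg]
    rw [norm_smul, norm_smul, norm_smul, hsymm,
      Real.norm_eq_abs, Real.norm_eq_abs, abs_of_pos hη,
      abs_of_pos (by positivity : (0:ℝ) < η * η)] at t1
    have c1 : η * ‖Aᵀ * G‖ ≤ (455/384) * (η * M) := by
      have := mul_le_mul_of_nonneg_left hnormAG hη.le
      linarith
    have c2 : η * η * ‖Gᵀ * G‖ ≤ (1/19) * (η * M) := by
      have e1 : η * η * ‖Gᵀ * G‖ ≤ (η * M) * (η * M) := by
        have := mul_le_mul_of_nonneg_left hGG (by positivity : (0:ℝ) ≤ η * η)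
        nlinarith
      nlinarith [mul_nonneg hη.le hM0]
    have : (455/384 : ℝ) * (η * M) + (455/384) * (η * M) + (1/19) * (η * M) ≤ 3 * η * M := by
      nlinarith [mul_nonneg hη.le hM0]
    linarith
  refine ⟨hmain, ?_⟩
  calc ‖(A - η • G)ᵀ * (A - η • G) - 1‖ ≤ (1/36) * ‖e‖ + 3 * η * M := hmain
    _ ≤ (1/36) * (1/6) + 3 * (1/19) := by
        have : 3 * η * M ≤ 3 * (1/19) := by nlinarith
        have : (1/36 : ℝ) * ‖e‖ ≤ (1/36) * (1/6) := by nlinarith [norm_nonneg e]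
        linarith
    _ ≤ 1/6 := by norm_num
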